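/- arXiv:0907.0965 — 8 statements merged into one kernel-verified Lean document; each statement's English description precedes it below -/
import Mathlib

section
/- Let F be a field of characteristic zero, V a finite-dimensional F-vector space, A : V → V a linear operator with trace zero, v ∈ V and φ ∈ V*. Suppose that for every λ ∈ F the operator A + λ·(v ⊗ φ) is nilpotent. Then φ(Aⁱ v) = 0 for every i ≥ 0. -/
theorem stmt_0 (F V : Type*) [Field F] [CharZero F] [AddCommGroup V] [Module F V]
    [FiniteDimensional F V] (A : V →ₗ[F] V) (hA : LinearMap.trace F V A = 0)
    (v : V) (φ : V →ₗ[F] F)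
    (h : ∀ c : F, IsNilpotent (A + c • φ.smulRight v)) :
    ∀ i : ℕ, φ ((A ^ i) v) = 0 := by
  set B : V →ₗ[F] V := φ.smulRight v with hB
  have hAnil : IsNilpotent A := by simpa using h 0
  -- trace of A^j * B is φ (A^j v)
  have htr : ∀ j : ℕ, LinearMap.trace F V (A ^ j * B) = φ ((A ^ j) v) := by
    intro j
    have heq : A ^ j * B = φ.smulRight ((A ^ j) v) := by
      ext w
      simp [hB, Module.End.mul_apply]
    have h2 : φ.smulRight ((A ^ j) v) = dualTensorHom F V V (φ ⊗ₜ (A ^ j) v) := rfl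
    rw [heq, h2, ← LinearMap.comp_apply, LinearMap.trace_eq_contract]
    simp
  intro i
  induction i using Nat.strong_induction_on with
  | _ i IH =>
  -- B * A^j * B = 0 for j < i
  have hz : ∀ j < i, B * (A ^ j * B) = 0 := by
    intro j hj
    ext w
    have := IH j hj
    simp [hB, Module.End.mul_apply, this]
  -- expansion
  have hexp : ∀ n ≤ i + 1, (A + (1:F) • B) ^ n =
      A ^ n + ∑ j ∈ Finset.range n, A ^ j * B * A ^ (n - 1 - j) := by
    intro n hn
    induction n with
    | zero => simp
    | succ n ih =>
      have hn' : n ≤ i := Nat.lt_succ_iff.mp hn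
      have ihn := ih (le_trans (Nat.le_succ n) hn)
      rw [pow_succ, ihn]
      have hSB : (∑ j ∈ Finset.range n, A ^ j * B * A ^ (n - 1 - j)) * B = 0 := by
        rw [Finset.sum_mul]
        apply Finset.sum_eq_zero
        intro j hj
        have hjn : j < n := Finset.mem_range.mp hj
        have hj' : n - 1 - j < i := by omega
        calc A ^ j * B * A ^ (n - 1 - j) * B
            = A ^ j * (B * (A ^ (n - 1 - j) * B)) := by
              simp only [mul_assoc]
          _ = 0 := by rw [hz _ hj']; simp
      have hkey : (A ^ n + ∑ j ∈ Finset.range n, A ^ j * B * A ^ (n - 1 - j)) * (A + (1:F) • B)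
          = A ^ (n + 1) + (A ^ n * B + (∑ j ∈ Finset.range n, A ^ j * B * A ^ (n - 1 - j)) * A) := by
        simp only [one_smul]
        rw [add_mul, mul_add, mul_add, hSB]
        rw [show A ^ n * A = A ^ (n+1) from (pow_succ A n).symm]
        abel
      rw [hkey]
      congr 1
      rw [Finset.sum_range_succ, show n + 1 - 1 - n = 0 from by omega, pow_zero, mul_one,
        Finset.sum_mul, add_comm]
      congr 1
      apply Finset.sum_congr rfl
      intro j hj
      have hjn : j < n := Finset.mem_range.mp hj
      have : A ^ (n - 1 - j) * A = A ^ (n - j) := by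
        rw [← pow_succ]
        congr 1
        omega
      rw [mul_assoc, mul_assoc, this, show n + 1 - 1 - j = n - j from by omega, mul_assoc]
  -- take trace at n = i + 1
  have hnil : IsNilpotent ((A + (1:F) • B) ^ (i + 1)) := (h 1).pow_of_pos (Nat.succ_ne_zero i)
  have htr0 : LinearMap.trace F V ((A + (1:F) • B) ^ (i + 1)) = 0 := by
    have := LinearMap.isNilpotent_trace_of_isNilpotent hnil
    exact this.eq_zero
  have htrA : LinearMap.trace F V (A ^ (i + 1)) = 0 :=
    (LinearMap.isNilpotent_trace_of_isNilpotent (hAnil.pow_of_pos (Nat.succ_ne_zero i))).eq_zero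
  rw [hexp (i + 1) le_rfl, map_add, htrA, zero_add, map_sum] at htr0
  have hterm : ∀ j ∈ Finset.range (i + 1),
      LinearMap.trace F V (A ^ j * B * A ^ (i + 1 - 1 - j)) = φ ((A ^ i) v) := by
    intro j hj
    have hji : j ≤ i := Nat.lt_succ_iff.mp (Finset.mem_range.mp hj)
    rw [LinearMap.trace_mul_comm, ← mul_assoc, ← pow_add]
    rw [show i + 1 - 1 - j + j = i from by omega]
    exact htr i
  rw [Finset.sum_congr rfl hterm, Finset.sum_const, Finset.card_range, nsmul_eq_mul] at htr0
  push_cast at htr0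
  exact (mul_eq_zero.mp htr0).resolve_left (Nat.cast_add_one_ne_zero i)
end

section
/- Let M be a representation of sl₂ over a field of characteristic zero and let v ∈ M satisfy e·v = 0 and fⁿ·v = 0 for some n ≥ 1. Then (∏_{i=0}^{n-1}(h - i)) v = 0, the subspace U(h)·v spanned by {hʲ v : j ≥ 0} is finite-dimensional, and h acts semisimply on it with eigenvalues among {0, 1, …, n-1}. -/
section Aux
variable {F M : Type*} [Field F] [CharZero F] [AddCommGroup M] [Module F M]
  (E Fo H : Module.End F M)

private def prodn (n : ℕ) : Module.End F M :=
  ((List.range n).map fun i : ℕ => H - (i : F) • 1).prod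

private lemma prodn_succ (n : ℕ) : prodn H (n+1) = prodn H n * (H - (n : F) • 1) := by
  unfold prodn
  rw [List.range_succ, List.map_append, List.prod_append]
  simp

private lemma comm_id (hHF : ⁅H, Fo⁆ = -((2 : F) • Fo)) (hEF : ⁅E, Fo⁆ = H) (m : ℕ) :
    E * Fo ^ (m+1) = Fo ^ (m+1) * E + ((m+1 : ℕ) : F) • (Fo ^ m * (H - (m : F) • 1)) := by
  have h1 : E * Fo = Fo * E + H := by
    rw [Ring.lie_def] at hEF; rw [← hEF]; abel
  have h2 : H * Fo = Fo * H - (2 : F) • Fo := by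
    rw [Ring.lie_def] at hHF
    rw [sub_eq_iff_eq_add] at hHF; rw [hHF]; abel
  induction m with
  | zero => simpa using h1
  | succ m ih =>
    have step : E * Fo ^ (m+2) = (Fo ^ (m+1) * E + ((m+1 : ℕ) : F) • (Fo ^ m * (H - (m : F) • 1))) * Fo := by
      rw [pow_succ, ← mul_assoc, ih]
    rw [step]
    simp only [add_mul, smul_mul_assoc, mul_assoc, sub_mul, one_mul]
    rw [h1, h2]
    simp only [mul_add, mul_sub, mul_smul_comm, mul_one, ← mul_assoc, ← pow_succ]
    match_scalars <;> ring

private lemma prodn_zero_vec (hHE : ⁅H, E⁆ = (2 : F) • E) (hHF : ⁅H, Fo⁆ = -((2 : F) • Fo))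
    (hEF : ⁅E, Fo⁆ = H) :
    ∀ n : ℕ, ∀ v : M, E v = 0 → (Fo ^ n) v = 0 → prodn H n v = 0 := by
  intro n
  induction n with
  | zero => intro v _ hf; simpa [prodn] using hf
  | succ n ih =>
    intro v hv hf
    set w := (H - (n : F) • 1) v with hwdef
    have hEH : E * H = H * E - (2 : F) • E := by
      rw [Ring.lie_def] at hHE; rw [sub_eq_iff_eq_add] at hHE; rw [hHE]; abel
    have hw1 : E w = 0 := by
      have : E w = (E * H) v - (n : F) • E v := by
        simp [hwdef, map_sub, map_smul, Module.End.mul_apply, LinearMap.sub_apply,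
          LinearMap.smul_apply, Module.End.one_apply]
      rw [this, hEH]
      simp [LinearMap.sub_apply, LinearMap.smul_apply, Module.End.mul_apply, hv]
    have hw2 : (Fo ^ n) w = 0 := by
      have hc := comm_id E Fo H hHF hEF n
      have happ := congrArg (fun (T : Module.End F M) => T v) hc
      simp only [Module.End.mul_apply, LinearMap.add_apply, LinearMap.smul_apply, hv, hf,
        map_zero] at happ
      rw [zero_add] at happ
      have hne : ((n+1 : ℕ) : F) ≠ 0 := Nat.cast_ne_zero.mpr (Nat.succ_ne_zero n)
      have := (smul_eq_zero.mp happ.symm).resolve_left hne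
      simpa [hwdef] using this
    have := ih w hw1 hw2
    rw [prodn_succ, Module.End.mul_apply]
    exact this

private lemma pow_mem_span :
    ∀ n : ℕ, ∀ v : M, prodn H n v = 0 →
      (H ^ n) v ∈ Submodule.span F (Set.range fun k : Fin n => (H ^ (k : ℕ)) v) := by
  intro n
  induction n with
  | zero =>
    intro v hp
    have hv0 : v = 0 := by simpa [prodn] using hp
    simp [hv0]
  | succ n ih =>
    intro v hp
    rw [prodn_succ, Module.End.mul_apply] at hp
    set w := (H - (n : F) • 1) v with hwdef
    have hw : ∀ k : ℕ, (H ^ k) w = (H ^ (k+1)) v - (n : F) • (H ^ k) v := by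
      intro k
      have : (H ^ k) (H v) = (H ^ (k+1)) v := by
        rw [pow_succ, Module.End.mul_apply]
      simp [hwdef, map_sub, map_smul, LinearMap.sub_apply, LinearMap.smul_apply,
        Module.End.one_apply, this]
    have hmemT : ∀ k : ℕ, k ≤ n →
        (H ^ k) v ∈ Submodule.span F (Set.range fun k : Fin (n+1) => (H ^ (k : ℕ)) v) := by
      intro k hk
      exact Submodule.subset_span ⟨⟨k, Nat.lt_succ_of_le hk⟩, rfl⟩
    have hWle : Submodule.span F (Set.range fun k : Fin n => (H ^ (k : ℕ)) w) ≤
        Submodule.span F (Set.range fun k : Fin (n+1) => (H ^ (k : ℕ)) v) := by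
      rw [Submodule.span_le]
      rintro x ⟨k, rfl⟩
      show (H ^ (k : ℕ)) w ∈ _
      rw [hw]
      exact sub_mem (hmemT _ k.2) (Submodule.smul_mem _ _ (hmemT _ (le_of_lt k.2)))
    have h1 : (H ^ n) w ∈ Submodule.span F (Set.range fun k : Fin (n+1) => (H ^ (k : ℕ)) v) :=
      hWle (ih w hp)
    have h2 : (H ^ (n+1)) v = (H ^ n) w + (n : F) • (H ^ n) v := by
      rw [hw n]; abel
    rw [h2]
    exact add_mem h1 (Submodule.smul_mem _ _ (hmemT n le_rfl))

private lemma mem_sup_eigen :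
    ∀ n : ℕ, ∀ v : M, prodn H n v = 0 →
      v ∈ ⨆ i ∈ Finset.range n, Module.End.eigenspace H (i : F) := by
  intro n
  induction n with
  | zero =>
    intro v hp
    have hv0 : v = 0 := by simpa [prodn] using hp
    simp [hv0]
  | succ n ih =>
    intro v hp
    rw [prodn_succ, Module.End.mul_apply] at hp
    set w := (H - (n : F) • 1) v with hwdef
    have hwmem := ih w hp
    -- surjectivity of (H - n • 1) on the sup of eigenspaces
    have hmap : (⨆ i ∈ Finset.range n, Module.End.eigenspace H (i : F)) ≤
        Submodule.map (H - (n : F) • 1)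
          (⨆ i ∈ Finset.range n, Module.End.eigenspace H (i : F)) := by
      refine iSup₂_le fun i hi => ?_
      intro x hx
      have hx' : H x = (i : F) • x := Module.End.mem_eigenspace_iff.mp hx
      have hine : (i : F) - (n : F) ≠ 0 := by
        have : i ≠ n := Nat.ne_of_lt (Finset.mem_range.mp hi)
        exact sub_ne_zero.mpr (by exact_mod_cast this)
      refine ⟨((i : F) - (n : F))⁻¹ • x, ?_, ?_⟩
      · exact le_iSup₂ (f := fun i (_ : i ∈ Finset.range n) => Module.End.eigenspace H (i : F))
          i hi (Submodule.smul_mem _ _ hx)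
      · rw [map_smul]
        rw [LinearMap.sub_apply, LinearMap.smul_apply, Module.End.one_apply, hx', ← sub_smul,
          smul_smul, inv_mul_cancel₀ hine, one_smul]
    obtain ⟨u, hu, huw⟩ := hmap hwmem
    have hvu : v - u ∈ Module.End.eigenspace H (n : F) := by
      rw [Module.End.mem_eigenspace_iff]
      have h0 : (H - (n : F) • 1) (v - u) = 0 := by
        rw [map_sub, huw, ← hwdef, sub_self]
      rw [LinearMap.sub_apply, LinearMap.smul_apply, Module.End.one_apply, sub_eq_zero] at h0
      exact h0
    have hmono : (⨆ i ∈ Finset.range n, Module.End.eigenspace H (i : F)) ≤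
        ⨆ i ∈ Finset.range (n+1), Module.End.eigenspace H (i : F) :=
      biSup_mono fun i hi => Finset.range_subset_range.mpr (Nat.le_succ n) hi
    have hsplit : v = (v - u) + u := (sub_add_cancel v u).symm
    rw [hsplit]
    exact add_mem
      (le_iSup₂ (f := fun i (_ : i ∈ Finset.range (n+1)) => Module.End.eigenspace H (i : F))
        n (Finset.self_mem_range_succ n) hvu) (hmono hu)

end Aux

theorem stmt_3 (F M : Type*) [Field F] [CharZero F] [AddCommGroup M] [Module F M]
    (E Fo H : Module.End F M)
    (hHE : ⁅H, E⁆ = (2 : F) • E) (hHF : ⁅H, Fo⁆ = -((2 : F) • Fo)) (hEF : ⁅E, Fo⁆ = H)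
    (v : M) (hv : E v = 0) (n : ℕ) (hn : 1 ≤ n) (hfn : (Fo ^ n) v = 0) :
    (((List.range n).map fun i : ℕ => H - (i : F) • 1).prod) v = 0 ∧
    Module.Finite F ↥(Submodule.span F (Set.range fun j : ℕ => (H ^ j) v)) ∧
    Submodule.span F (Set.range fun j : ℕ => (H ^ j) v) ≤
      ⨆ i ∈ Finset.range n, Module.End.eigenspace H (i : F) := by
  have h1 : prodn H n v = 0 := prodn_zero_vec E Fo H hHE hHF hEF n v hv hfn
  refine ⟨h1, ?_, ?_⟩
  · -- finiteness
    set T := Submodule.span F (Set.range fun k : Fin n => (H ^ (k : ℕ)) v) with hT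
    have hTn : (H ^ n) v ∈ T := pow_mem_span H n v h1
    have hTinv : ∀ x ∈ T, H x ∈ T := by
      intro x hx
      induction hx using Submodule.span_induction with
      | mem x hx =>
        obtain ⟨k, rfl⟩ := hx
        have : H ((H ^ (k : ℕ)) v) = (H ^ ((k : ℕ) + 1)) v := by
          rw [pow_succ', Module.End.mul_apply]
        rw [this]
        rcases lt_or_eq_of_le (Nat.succ_le_of_lt k.2) with hlt | heq
        · exact Submodule.subset_span ⟨⟨(k : ℕ) + 1, hlt⟩, rfl⟩
        · rw [show ((k : ℕ) + 1) = n from heq]; exact hTn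
      | zero => simp
      | add a b _ _ ha hb => rw [map_add]; exact add_mem ha hb
      | smul c a _ ha => rw [map_smul]; exact Submodule.smul_mem _ _ ha
    have hall : ∀ j : ℕ, (H ^ j) v ∈ T := by
      intro j
      induction j with
      | zero => exact Submodule.subset_span ⟨⟨0, hn⟩, rfl⟩
      | succ j ih =>
        have : (H ^ (j + 1)) v = H ((H ^ j) v) := by
          rw [pow_succ', Module.End.mul_apply]
        rw [this]; exact hTinv _ ih
    have hle : Submodule.span F (Set.range fun j : ℕ => (H ^ j) v) ≤ T := by
      rw [Submodule.span_le]; rintro x ⟨j, rfl⟩; exact hall j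
    have : Module.Finite F T := Module.Finite.span_of_finite F (Set.finite_range _)
    exact Submodule.finiteDimensional_of_le hle
  · -- span ≤ sup of eigenspaces
    set W := ⨆ i ∈ Finset.range n, Module.End.eigenspace H (i : F) with hW
    have hvW : v ∈ W := mem_sup_eigen H n v h1
    have hWinv : ∀ x ∈ W, H x ∈ W := by
      have hmap : Submodule.map H W ≤ W := by
        rw [hW, Submodule.map_iSup]
        refine iSup_le fun i => ?_
        rw [Submodule.map_iSup]
        refine iSup_le fun hi => ?_
        refine le_trans ?_ (le_iSup₂ (f := fun i (_ : i ∈ Finset.range n) =>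
          Module.End.eigenspace H (i : F)) i hi)
        rintro x ⟨y, hy, rfl⟩
        show H y ∈ Module.End.eigenspace H (i : F)
        rw [SetLike.mem_coe] at hy
        rw [Module.End.mem_eigenspace_iff] at hy ⊢
        rw [hy, map_smul, hy]
      intro x hx
      exact hmap ⟨x, hx, rfl⟩
    rw [Submodule.span_le]
    rintro x ⟨j, rfl⟩
    show (H ^ j) v ∈ W
    induction j with
    | zero => simpa using hvW
    | succ j ih =>
      have : (H ^ (j + 1)) v = H ((H ^ j) v) := by
        rw [pow_succ', Module.End.mul_apply]
      rw [this]; exact hWinv _ ih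
end

section
/- Let M be a representation of sl₂ over a field of characteristic zero and let v ∈ M. Suppose eᵏ·v = 0 and fⁿ·v = 0 for some positive integers k, n. Then the sl₂-subrepresentation of M generated by v is finite-dimensional. -/
open Submodule

set_option linter.unusedSectionVars false
set_option maxHeartbeats 1000000

universe u

section Sl2Aux

variable {F : Type*} [Field F] [CharZero F]
variable {M : Type*} [AddCommGroup M] [Module F M]

lemma EH_comm (E H : Module.End F M) (hHE : ⁅H, E⁆ = (2 : F) • E) :
    E * H = H * E - (2 : F) • E := by
  rw [eq_sub_iff_add_eq, ← hHE, Ring.lie_def]; abel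

lemma HF_comm (Fo H : Module.End F M) (hHF : ⁅H, Fo⁆ = -((2 : F) • Fo)) :
    H * Fo = Fo * H - (2 : F) • Fo := by
  have h := hHF; rw [Ring.lie_def] at h
  rw [sub_eq_iff_eq_add.mp h]; abel

lemma EF_comm (E Fo H : Module.End F M) (hEF : ⁅E, Fo⁆ = H) :
    E * Fo = Fo * E + H := by
  rw [Ring.lie_def] at hEF; rw [← hEF]; abel

-- I1 : H * Fo^b = Fo^b * H - (2b) • Fo^b
lemma H_pow_F (Fo H : Module.End F M) (hHF : ⁅H, Fo⁆ = -((2 : F) • Fo)) (b : ℕ) :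
    H * Fo ^ b = Fo ^ b * H - ((2 * b : ℕ) : F) • Fo ^ b := by
  induction b with
  | zero => simp
  | succ b ih =>
    have h1 := HF_comm Fo H hHF
    calc H * Fo ^ (b + 1) = (H * Fo ^ b) * Fo := by rw [pow_succ, ← mul_assoc]
    _ = (Fo ^ b * H - ((2 * b : ℕ) : F) • Fo ^ b) * Fo := by rw [ih]
    _ = Fo ^ b * (H * Fo) - ((2 * b : ℕ) : F) • (Fo ^ b * Fo) := by
        rw [sub_mul, mul_assoc, smul_mul_assoc]
    _ = Fo ^ b * (Fo * H - (2 : F) • Fo) - ((2 * b : ℕ) : F) • Fo ^ (b + 1) := by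
        rw [h1, pow_succ]
    _ = Fo ^ (b + 1) * H - ((2 * (b + 1) : ℕ) : F) • Fo ^ (b + 1) := by
        rw [mul_sub, mul_smul_comm, ← pow_succ, ← mul_assoc, ← pow_succ]
        push_cast
        rw [sub_sub]
        congr 1
        rw [← add_smul]
        ring_nf

-- I2 : E * Fo^(b+1) = Fo^(b+1) * E + (b+1) • (Fo^b * H) - ((b+1)*b) • Fo^b
lemma E_pow_F (E Fo H : Module.End F M) (hHF : ⁅H, Fo⁆ = -((2 : F) • Fo))
    (hEF : ⁅E, Fo⁆ = H) (b : ℕ) :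
    E * Fo ^ (b + 1) = Fo ^ (b + 1) * E + ((b : F) + 1) • (Fo ^ b * H)
      - (((b : F) + 1) * b) • Fo ^ b := by
  induction b with
  | zero => simpa using EF_comm E Fo H hEF
  | succ b ih =>
    have h1 := HF_comm Fo H hHF
    have h2 := EF_comm E Fo H hEF
    calc E * Fo ^ (b + 2) = (E * Fo ^ (b + 1)) * Fo := by rw [pow_succ, ← mul_assoc]
    _ = (Fo ^ (b + 1) * E + ((b : F) + 1) • (Fo ^ b * H) - (((b : F) + 1) * b) • Fo ^ b) * Fo := by
        rw [ih]
    _ = Fo ^ (b + 1) * (E * Fo) + ((b : F) + 1) • (Fo ^ b * (H * Fo))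
          - (((b : F) + 1) * b) • Fo ^ (b + 1) := by
        rw [sub_mul, add_mul, mul_assoc, smul_mul_assoc, smul_mul_assoc, mul_assoc, ← pow_succ]
    _ = Fo ^ (b + 1) * (Fo * E + H) + ((b : F) + 1) • (Fo ^ b * (Fo * H - (2:F) • Fo))
          - (((b : F) + 1) * b) • Fo ^ (b + 1) := by rw [h1, h2]
    _ = Fo ^ (b + 2) * E + ((b : F) + 2) • (Fo ^ (b + 1) * H)
          - (((b : F) + 2) * ((b : F) + 1)) • Fo ^ (b + 1) := by
        rw [mul_add, mul_sub, ← mul_assoc, ← pow_succ, mul_smul_comm, ← mul_assoc, ← pow_succ]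
        rw [smul_sub, smul_smul]
        module
    _ = Fo ^ (b + 2) * E + (((b : ℕ) + 1 : ℕ) + 1 : F) • (Fo ^ (b + 1) * H)
          - (((((b : ℕ) + 1 : ℕ) : F) + 1) * ((b : ℕ) + 1 : ℕ)) • Fo ^ (b + 1) := by
        push_cast; ring_nf

/-- `uvec H v c = (H - (c-1))⋯(H-1)·H · v` -/
def uvec (H : Module.End F M) (v : M) : ℕ → M
  | 0 => v
  | c + 1 => H (uvec H v c) - (c : F) • uvec H v c

lemma uvec_shift {F : Type*} [Field F] [CharZero F] {M : Type*} [AddCommGroup M] [Module F M]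
    (H : Module.End F M) (w : M) (a : F) (c : ℕ) :
    uvec H (H w - a • w) c = H (uvec H w c) - a • uvec H w c := by
  induction c with
  | zero => rfl
  | succ c ih =>
    simp only [uvec, ih, map_sub, map_smul, smul_sub]
    module

lemma E_uvec (E H : Module.End F M) (hHE : ⁅H, E⁆ = (2 : F) • E)
    (v : M) (hEv : E v = 0) (c : ℕ) : E (uvec H v c) = 0 := by
  induction c with
  | zero => exact hEv
  | succ c ih =>
    have h := EH_comm E H hHE
    simp only [uvec, map_sub, map_smul, ih, smul_zero, sub_zero]
    calc E (H (uvec H v c)) = (E * H) (uvec H v c) := rfl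
    _ = 0 := by
        rw [h]
        simp [LinearMap.sub_apply, Module.End.mul_apply, ih]

lemma Fn_uvec (Fo H : Module.End F M) (hHF : ⁅H, Fo⁆ = -((2 : F) • Fo))
    (v : M) (n : ℕ) (hFv : (Fo ^ n) v = 0) (c : ℕ) : (Fo ^ n) (uvec H v c) = 0 := by
  induction c with
  | zero => exact hFv
  | succ c ih =>
    have h := H_pow_F Fo H hHF n
    simp only [uvec, map_sub, map_smul, ih, smul_zero, sub_zero]
    have : (Fo ^ n) * H = H * Fo ^ n + ((2 * n : ℕ) : F) • Fo ^ n := by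
      rw [h]; abel
    calc (Fo ^ n) (H (uvec H v c)) = ((Fo ^ n) * H) (uvec H v c) := rfl
    _ = 0 := by
        rw [this]
        simp [LinearMap.add_apply, Module.End.mul_apply, LinearMap.smul_apply, ih]

/-- key identity: if `E v = 0` then `Eᵐ Fᵐ v = m! • uvec H v m`. -/
lemma key_identity (E Fo H : Module.End F M) (hHE : ⁅H, E⁆ = (2 : F) • E)
    (hHF : ⁅H, Fo⁆ = -((2 : F) • Fo)) (hEF : ⁅E, Fo⁆ = H) (m : ℕ) :
    ∀ v : M, E v = 0 → (E ^ m) ((Fo ^ m) v) = ((m.factorial : F)) • uvec H v m := by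
  induction m with
  | zero => intro v _; simp [uvec]
  | succ m ih =>
    intro v hEv
    have h2 := E_pow_F E Fo H hHF hEF m
    -- E (Fo^(m+1) v) = (m+1) • Fo^m (H v - m • v)
    have step : E ((Fo ^ (m + 1)) v) = ((m : F) + 1) • (Fo ^ m) (H v - (m : F) • v) := by
      calc E ((Fo ^ (m + 1)) v) = (E * Fo ^ (m + 1)) v := rfl
      _ = (Fo ^ (m + 1)) (E v) + ((m : F) + 1) • (Fo ^ m) (H v)
            - (((m : F) + 1) * m) • (Fo ^ m) v := by
          rw [h2]
          simp [LinearMap.add_apply, LinearMap.sub_apply, Module.End.mul_apply,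
            LinearMap.smul_apply]
      _ = ((m : F) + 1) • (Fo ^ m) (H v - (m : F) • v) := by
          rw [hEv, map_zero, map_sub, map_smul, smul_sub, zero_add, smul_smul]
    have hEv' : E (H v - (m : F) • v) = 0 := by
      have h := EH_comm E H hHE
      have : E (H v) = 0 := by
        calc E (H v) = (E * H) v := rfl
        _ = 0 := by rw [h]; simp [LinearMap.sub_apply, Module.End.mul_apply,
              LinearMap.smul_apply, hEv]
      rw [map_sub, map_smul, this, hEv, smul_zero, sub_zero]
    calc (E ^ (m + 1)) ((Fo ^ (m + 1)) v) = (E ^ m) (E ((Fo ^ (m + 1)) v)) := by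
          rw [pow_succ]; rfl
    _ = (E ^ m) (((m : F) + 1) • (Fo ^ m) (H v - (m : F) • v)) := by rw [step]
    _ = ((m : F) + 1) • ((m.factorial : F) • uvec H (H v - (m : F) • v) m) := by
          rw [map_smul, ih _ hEv']
    _ = (((m + 1).factorial : F)) • uvec H v (m + 1) := by
          rw [uvec_shift]
          show _ = _ • uvec H v (m + 1)
          simp only [uvec, smul_smul, Nat.factorial_succ]
          push_cast
          ring_nf

lemma uvec_eventually_zero (E Fo H : Module.End F M) (hHE : ⁅H, E⁆ = (2 : F) • E)
    (hHF : ⁅H, Fo⁆ = -((2 : F) • Fo)) (hEF : ⁅E, Fo⁆ = H)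
    (v : M) (n : ℕ) (hEv : E v = 0) (hFv : (Fo ^ n) v = 0) :
    ∀ c, n ≤ c → uvec H v c = 0 := by
  have h0 : uvec H v n = 0 := by
    have := key_identity E Fo H hHE hHF hEF n v hEv
    rw [hFv, map_zero] at this
    have hne : ((n.factorial : F)) ≠ 0 := Nat.cast_ne_zero.mpr n.factorial_ne_zero
    exact (smul_eq_zero.mp this.symm).resolve_left hne
  intro c hc
  induction c with
  | zero => simpa [Nat.le_zero.mp hc] using h0
  | succ c ih =>
    rcases Nat.lt_or_ge n (c + 1) with h | h
    · have := ih (Nat.lt_succ_iff.mp h)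
      simp [uvec, this]
    · have : n = c + 1 := le_antisymm hc h
      rw [← this]; exact h0

/-- Base case: if `E v = 0` and `Fⁿ v = 0`, there is an invariant fin-dim subspace ∋ v. -/
lemma base_case (E Fo H : Module.End F M) (hHE : ⁅H, E⁆ = (2 : F) • E)
    (hHF : ⁅H, Fo⁆ = -((2 : F) • Fo)) (hEF : ⁅E, Fo⁆ = H)
    (v : M) (n : ℕ) (hn : 0 < n) (hEv : E v = 0) (hFv : (Fo ^ n) v = 0) :
    ∃ W : Submodule F M, v ∈ W ∧ (∀ x ∈ W, E x ∈ W) ∧ (∀ x ∈ W, Fo x ∈ W) ∧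
      (∀ x ∈ W, H x ∈ W) ∧ FiniteDimensional F W := by
  set S : Set M := Set.range (fun p : Fin n × Fin n => (Fo ^ (p.1 : ℕ)) (uvec H v (p.2 : ℕ)))
    with hS
  have hmem : ∀ b' c' : ℕ, b' ≤ n → (Fo ^ b') (uvec H v c') ∈ span F S := by
    intro b' c' hb
    rcases Nat.lt_or_ge c' n with hc | hc
    · rcases Nat.lt_or_ge b' n with hb' | hb'
      · exact subset_span ⟨(⟨b', hb'⟩, ⟨c', hc⟩), rfl⟩
      · have hbn : b' = n := le_antisymm hb hb'
        rw [hbn, Fn_uvec Fo H hHF v n hFv c']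
        exact zero_mem _
    · rw [uvec_eventually_zero E Fo H hHE hHF hEF v n hEv hFv c' hc, map_zero]
      exact zero_mem _
  have hHu : ∀ c : ℕ, H (uvec H v c) = uvec H v (c + 1) + (c : F) • uvec H v c := by
    intro c
    show H (uvec H v c) = (H (uvec H v c) - (c : F) • uvec H v c) + (c : F) • uvec H v c
    abel
  refine ⟨span F S, ?_, ?_, ?_, ?_, ?_⟩
  · exact subset_span ⟨(⟨0, hn⟩, ⟨0, hn⟩), by simp [uvec]⟩
  · -- E-invariance
    suffices h : span F S ≤ (span F S).comap E by intro x hx; exact h hx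
    rw [span_le]
    rintro _ ⟨⟨⟨b, hb⟩, c⟩, rfl⟩
    simp only [SetLike.mem_coe, mem_comap]
    match b, hb with
    | 0, hb =>
      show E ((Fo ^ 0) (uvec H v (c : ℕ))) ∈ span F S
      rw [pow_zero, show ((1 : Module.End F M) (uvec H v (c : ℕ))) = uvec H v (c : ℕ) from rfl,
        E_uvec E H hHE v hEv (c : ℕ)]
      exact zero_mem _
    | b + 1, hb =>
      show E ((Fo ^ (b + 1)) (uvec H v (c : ℕ))) ∈ span F S
      have e1 : E ((Fo ^ (b + 1)) (uvec H v (c : ℕ)))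
          = ((b : F) + 1) • ((Fo ^ b) (uvec H v ((c : ℕ) + 1))
              + ((c : ℕ) : F) • (Fo ^ b) (uvec H v (c : ℕ)))
            - (((b : F) + 1) * (b : F)) • (Fo ^ b) (uvec H v (c : ℕ)) := by
        calc E ((Fo ^ (b + 1)) (uvec H v (c : ℕ)))
            = (E * Fo ^ (b + 1)) (uvec H v (c : ℕ)) := rfl
        _ = _ := by
            rw [E_pow_F E Fo H hHF hEF b]
            simp only [LinearMap.sub_apply, LinearMap.add_apply, Module.End.mul_apply,
              LinearMap.smul_apply, E_uvec E H hHE v hEv (c : ℕ), map_zero, zero_add,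
              hHu (c : ℕ), map_add, map_smul]
      rw [e1]
      have hble : b ≤ n := by omega
      exact sub_mem (smul_mem _ _ (add_mem (hmem b _ hble) (smul_mem _ _ (hmem b _ hble))))
        (smul_mem _ _ (hmem b _ hble))
  · -- F-invariance
    suffices h : span F S ≤ (span F S).comap Fo by intro x hx; exact h hx
    rw [span_le]
    rintro _ ⟨⟨b, c⟩, rfl⟩
    simp only [SetLike.mem_coe, mem_comap]
    have e1 : Fo ((Fo ^ (b : ℕ)) (uvec H v (c : ℕ)))
        = (Fo ^ ((b : ℕ) + 1)) (uvec H v (c : ℕ)) := by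
      rw [pow_succ']; rfl
    rw [e1]
    exact hmem _ _ b.2
  · -- H-invariance
    suffices h : span F S ≤ (span F S).comap H by intro x hx; exact h hx
    rw [span_le]
    rintro _ ⟨⟨b, c⟩, rfl⟩
    simp only [SetLike.mem_coe, mem_comap]
    have e1 : H ((Fo ^ (b : ℕ)) (uvec H v (c : ℕ)))
        = ((Fo ^ (b : ℕ)) (uvec H v ((c : ℕ) + 1))
            + ((c : ℕ) : F) • (Fo ^ (b : ℕ)) (uvec H v (c : ℕ)))
          - ((2 * (b : ℕ) : ℕ) : F) • (Fo ^ (b : ℕ)) (uvec H v (c : ℕ)) := by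
      calc H ((Fo ^ (b : ℕ)) (uvec H v (c : ℕ)))
          = (H * Fo ^ (b : ℕ)) (uvec H v (c : ℕ)) := rfl
      _ = _ := by
          rw [H_pow_F Fo H hHF (b : ℕ)]
          simp only [LinearMap.sub_apply, Module.End.mul_apply, LinearMap.smul_apply,
            hHu (c : ℕ), map_add, map_smul]
    rw [e1]
    exact sub_mem (add_mem (hmem _ _ (le_of_lt b.2)) (smul_mem _ _ (hmem _ _ (le_of_lt b.2))))
      (smul_mem _ _ (hmem _ _ (le_of_lt b.2)))
  · exact FiniteDimensional.span_of_finite F (Set.finite_range _)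

lemma main_ind (k : ℕ) :
    ∀ (M : Type u) [AddCommGroup M] [Module F M] (E Fo H : Module.End F M),
      ⁅H, E⁆ = (2 : F) • E → ⁅H, Fo⁆ = -((2 : F) • Fo) → ⁅E, Fo⁆ = H →
      ∀ (v : M) (n : ℕ), 0 < n → (E ^ (k + 1)) v = 0 → (Fo ^ n) v = 0 →
      ∃ W : Submodule F M, v ∈ W ∧ (∀ x ∈ W, E x ∈ W) ∧ (∀ x ∈ W, Fo x ∈ W) ∧
        (∀ x ∈ W, H x ∈ W) ∧ FiniteDimensional F W := by
  induction k with
  | zero =>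
    intro M _ _ E Fo H hHE hHF hEF v n hn hEv hFv
    rw [pow_one] at hEv
    exact base_case E Fo H hHE hHF hEF v n hn hEv hFv
  | succ k ih =>
    intro M _ _ E Fo H hHE hHF hEF v n hn hEv hFv
    -- the vector w = E v satisfies E^(k+1) w = 0 and Fo^(n+1) w = 0
    have hEw : (E ^ (k + 1)) (E v) = 0 := by
      have : (E ^ (k + 1)) (E v) = (E ^ (k + 2)) v := by rw [pow_succ]; rfl
      rw [this, hEv]
    have hFnH : (Fo ^ n) (H v) = 0 := by
      have h := H_pow_F Fo H hHF n
      have h2 : (Fo ^ n) * H = H * Fo ^ n + ((2 * n : ℕ) : F) • Fo ^ n := by rw [h]; abel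
      calc (Fo ^ n) (H v) = ((Fo ^ n) * H) v := rfl
      _ = 0 := by
          rw [h2]
          simp [LinearMap.add_apply, Module.End.mul_apply, LinearMap.smul_apply, hFv]
    have hFn1 : (Fo ^ (n + 1)) v = 0 := by
      have : (Fo ^ (n + 1)) v = Fo ((Fo ^ n) v) := by rw [pow_succ']; rfl
      rw [this, hFv, map_zero]
    have hFw : (Fo ^ (n + 1)) (E v) = 0 := by
      have h := E_pow_F E Fo H hHF hEF n
      have h2 := DFunLike.congr_fun h v
      simp only [LinearMap.sub_apply, LinearMap.add_apply, Module.End.mul_apply,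
        LinearMap.smul_apply] at h2
      -- h2 : E ((Fo^(n+1)) v) = (Fo^(n+1)) (E v) + (n+1) • (Fo^n) (H v) - ... • (Fo^n) v
      rw [hFn1, map_zero, hFnH, hFv, smul_zero, smul_zero, sub_zero, add_zero] at h2
      exact h2.symm
    obtain ⟨W₁, hw₁, hE₁, hF₁, hH₁, hfd₁⟩ :=
      ih M E Fo H hHE hHF hEF (E v) (n + 1) n.succ_pos hEw hFw
    -- pass to the quotient M ⧸ W₁
    let mk := W₁.mkQ
    let EQ : Module.End F (M ⧸ W₁) := W₁.mapQ W₁ E (fun x hx => hE₁ x hx)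
    let Fq : Module.End F (M ⧸ W₁) := W₁.mapQ W₁ Fo (fun x hx => hF₁ x hx)
    let Hq : Module.End F (M ⧸ W₁) := W₁.mapQ W₁ H (fun x hx => hH₁ x hx)
    have hEq : ∀ x : M, EQ (mk x) = mk (E x) := fun x => by
      simp [mk, EQ, Submodule.mkQ_apply, Submodule.mapQ_apply]
    have hFq : ∀ x : M, Fq (mk x) = mk (Fo x) := fun x => by
      simp [mk, Fq, Submodule.mkQ_apply, Submodule.mapQ_apply]
    have hHq : ∀ x : M, Hq (mk x) = mk (H x) := fun x => by
      simp [mk, Hq, Submodule.mkQ_apply, Submodule.mapQ_apply]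
    have hHEq : ⁅Hq, EQ⁆ = (2 : F) • EQ := by
      apply Submodule.linearMap_qext
      ext x
      have h0 := DFunLike.congr_fun hHE x
      simp only [Ring.lie_def, LinearMap.sub_apply, Module.End.mul_apply,
        LinearMap.smul_apply] at h0
      show Hq (EQ (mk x)) - EQ (Hq (mk x)) = (2 : F) • EQ (mk x)
      simp only [hEq, hHq]
      rw [← map_sub, h0, map_smul]
    have hHFq : ⁅Hq, Fq⁆ = -((2 : F) • Fq) := by
      apply Submodule.linearMap_qext
      ext x
      have h0 := DFunLike.congr_fun hHF x
      simp only [Ring.lie_def, LinearMap.sub_apply, Module.End.mul_apply, LinearMap.neg_apply,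
        LinearMap.smul_apply] at h0
      show Hq (Fq (mk x)) - Fq (Hq (mk x)) = -((2 : F) • Fq (mk x))
      simp only [hFq, hHq]
      rw [← map_sub, h0, map_neg, map_smul]
    have hEFq : ⁅EQ, Fq⁆ = Hq := by
      apply Submodule.linearMap_qext
      ext x
      have h0 := DFunLike.congr_fun hEF x
      simp only [Ring.lie_def, LinearMap.sub_apply, Module.End.mul_apply] at h0
      show EQ (Fq (mk x)) - Fq (EQ (mk x)) = Hq (mk x)
      simp only [hEq, hFq, hHq]
      rw [← map_sub, h0]
    have hpowF : ∀ (m : ℕ) (x : M), (Fq ^ m) (mk x) = mk ((Fo ^ m) x) := by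
      intro m
      induction m with
      | zero => intro x; rfl
      | succ m ihm =>
        intro x
        have e1 : (Fq ^ (m + 1)) (mk x) = (Fq ^ m) (Fq (mk x)) := by rw [pow_succ]; rfl
        have e2 : ((Fo ^ (m + 1)) x) = (Fo ^ m) (Fo x) := by rw [pow_succ]; rfl
        rw [e1, e2, hFq, ihm]
    have hEqv : EQ (mk v) = 0 := by
      rw [hEq, Submodule.mkQ_apply, Submodule.Quotient.mk_eq_zero]; exact hw₁
    have hFqv : (Fq ^ n) (mk v) = 0 := by
      rw [hpowF, hFv, map_zero]
    obtain ⟨Wb, hvb, hEb, hFb, hHb, hfdb⟩ :=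
      base_case EQ Fq Hq hHEq hHFq hEFq (mk v) n hn hEqv hFqv
    -- lift back
    obtain ⟨S, hSspan⟩ : Wb.FG := Module.Finite.iff_fg.mp hfdb
    let g : (M ⧸ W₁) → M := Function.surjInv (Submodule.mkQ_surjective W₁)
    have hg : ∀ y, mk (g y) = y := fun y => Function.surjInv_eq _ y
    set W : Submodule F M := W₁ ⊔ span F (g '' ↑S) with hW
    have himg : mk '' (g '' ↑S) = ↑S := by
      rw [Set.image_image]
      simp only [hg, Set.image_id']
    have hchar : ∀ x : M, x ∈ W ↔ mk x ∈ Wb := by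
      intro x
      constructor
      · intro hx
        rw [hW, mem_sup] at hx
        obtain ⟨y, hy, z, hz, rfl⟩ := hx
        have h1 : mk y = 0 := by
          rw [Submodule.mkQ_apply, Submodule.Quotient.mk_eq_zero]; exact hy
        have h2 : mk z ∈ Wb := by
          have : mk z ∈ Submodule.map W₁.mkQ (span F (g '' ↑S)) :=
            Submodule.mem_map_of_mem hz
          rwa [Submodule.map_span, himg, hSspan] at this
        rw [map_add, h1, zero_add]
        exact h2
      · intro hx
        rw [← hSspan, ← himg, ← Submodule.map_span, Submodule.mem_map] at hx
        obtain ⟨z, hz, hzx⟩ := hx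
        have : x - z ∈ W₁ := by
          rw [← Submodule.Quotient.eq W₁]
          exact hzx.symm
        have hx' : x = (x - z) + z := by abel
        rw [hx']
        exact add_mem (mem_sup_left this) (mem_sup_right hz)
    haveI : FiniteDimensional F (span F (g '' ↑S)) :=
      FiniteDimensional.span_of_finite F ((S.finite_toSet).image g)
    refine ⟨W, ?_, ?_, ?_, ?_, ?_⟩
    · exact (hchar v).mpr hvb
    · intro x hx
      rw [hchar] at hx ⊢
      rw [← hEq]
      exact hEb _ hx
    · intro x hx
      rw [hchar] at hx ⊢
      rw [← hFq]
      exact hFb _ hx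
    · intro x hx
      rw [hchar] at hx ⊢
      rw [← hHq]
      exact hHb _ hx
    · exact Submodule.finiteDimensional_sup W₁ _

end Sl2Aux

theorem stmt_4 (F M : Type*) [Field F] [CharZero F] [AddCommGroup M] [Module F M]
    (E Fo H : Module.End F M)
    (hHE : ⁅H, E⁆ = (2 : F) • E) (hHF : ⁅H, Fo⁆ = -((2 : F) • Fo)) (hEF : ⁅E, Fo⁆ = H)
    (v : M) (k n : ℕ) (hk : 0 < k) (hn : 0 < n)
    (hE : (E ^ k) v = 0) (hF : (Fo ^ n) v = 0) :
    ∃ W : Submodule F M, v ∈ W ∧ (∀ x ∈ W, E x ∈ W) ∧ (∀ x ∈ W, Fo x ∈ W) ∧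
      (∀ x ∈ W, H x ∈ W) ∧ Module.Finite F ↥W ∧
      (∀ W' : Submodule F M, v ∈ W' → (∀ x ∈ W', E x ∈ W') → (∀ x ∈ W', Fo x ∈ W') →
        (∀ x ∈ W', H x ∈ W') → W ≤ W') := by
  obtain ⟨k', rfl⟩ : ∃ k', k = k' + 1 := ⟨k - 1, (Nat.succ_pred_eq_of_pos hk).symm⟩
  obtain ⟨Wf, hvf, hEf, hFf, hHf, hfdf⟩ := main_ind k' M E Fo H hHE hHF hEF v n hn hE hF
  set 𝒮 : Set (Submodule F M) := {W' | v ∈ W' ∧ (∀ x ∈ W', E x ∈ W') ∧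
    (∀ x ∈ W', Fo x ∈ W') ∧ (∀ x ∈ W', H x ∈ W')} with h𝒮
  have hWf : Wf ∈ 𝒮 := ⟨hvf, hEf, hFf, hHf⟩
  refine ⟨sInf 𝒮, ?_, ?_, ?_, ?_, ?_, ?_⟩
  · exact Submodule.mem_sInf.mpr fun W' hW' => hW'.1
  · intro x hx
    exact Submodule.mem_sInf.mpr fun W' hW' => hW'.2.1 x (Submodule.mem_sInf.mp hx W' hW')
  · intro x hx
    exact Submodule.mem_sInf.mpr fun W' hW' => hW'.2.2.1 x (Submodule.mem_sInf.mp hx W' hW')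
  · intro x hx
    exact Submodule.mem_sInf.mpr fun W' hW' => hW'.2.2.2 x (Submodule.mem_sInf.mp hx W' hW')
  · exact Submodule.finiteDimensional_of_le (sInf_le hWf)
  · intro W' h1 h2 h3 h4
    exact sInf_le ⟨h1, h2, h3, h4⟩
end

section
/- Let M be a representation of sl₂ over a field of characteristic zero, let v ∈ M with eᵏ·v = 0 and fⁿ·v = 0, and set w := e^{k-1}·v. Then f^{n+k-1}·w = 0. -/
theorem stmt_5 (F M : Type*) [Field F] [CharZero F] [AddCommGroup M] [Module F M]
    (E Fo H : Module.End F M)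
    (hHE : ⁅H, E⁆ = (2 : F) • E) (hHF : ⁅H, Fo⁆ = -((2 : F) • Fo)) (hEF : ⁅E, Fo⁆ = H)
    (v : M) (k n : ℕ) (hk : 1 ≤ k) (hn : 1 ≤ n)
    (hE : (E ^ k) v = 0) (hF : (Fo ^ n) v = 0) :
    (Fo ^ (n + k - 1)) ((E ^ (k - 1)) v) = 0 := by
  rw [Ring.lie_def] at hHE hHF hEF
  -- pointwise basic relations
  have hEFv : ∀ x : M, E (Fo x) = Fo (E x) + H x := by
    intro x
    have h := congrArg (fun T : Module.End F M => T x) hEF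
    simp only [LinearMap.sub_apply, Module.End.mul_apply] at h
    exact (sub_eq_iff_eq_add.mp h).trans (add_comm _ _)
  have hHEv : ∀ x : M, H (E x) = E (H x) + (2 : F) • E x := by
    intro x
    have h := congrArg (fun T : Module.End F M => T x) hHE
    simp only [LinearMap.sub_apply, Module.End.mul_apply, LinearMap.smul_apply] at h
    exact (sub_eq_iff_eq_add.mp h).trans (add_comm _ _)
  have hHFv : ∀ x : M, Fo (H x) = H (Fo x) + (2 : F) • Fo x := by
    intro x
    have h := congrArg (fun T : Module.End F M => T x) hHF
    simp only [LinearMap.sub_apply, Module.End.mul_apply, LinearMap.smul_apply,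
      LinearMap.neg_apply] at h
    have h' : Fo (H x) - H (Fo x) = (2 : F) • Fo x := by
      have := congrArg Neg.neg h
      simpa [neg_sub] using this
    exact (sub_eq_iff_eq_add.mp h').trans (add_comm _ _)
  -- pow application lemmas
  have powS : ∀ (A : Module.End F M) (m : ℕ) (x : M), (A ^ (m + 1)) x = (A ^ m) (A x) := by
    intro A m x; rw [pow_succ]; rfl
  have powS' : ∀ (A : Module.End F M) (m : ℕ) (x : M), (A ^ (m + 1)) x = A ((A ^ m) x) := by
    intro A m x; rw [pow_succ']; rfl
  -- H past E^a
  have hhe : ∀ (a : ℕ) (x : M), H ((E ^ a) x) = (E ^ a) (H x) + ((2 * a : ℕ) : F) • (E ^ a) x := by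
    intro a
    induction a with
    | zero => intro x; simp
    | succ a ih =>
      intro x
      rw [powS E a x, ih (E x), hHEv x, map_add, map_smul,
        show (E ^ a) (E (H x)) = (E ^ (a + 1)) (H x) from (powS E a (H x)).symm,
        show (E ^ a) (E x) = (E ^ (a + 1)) x from (powS E a x).symm]
      push_cast
      module
  -- Fo^m past H
  have hfh : ∀ (m : ℕ) (x : M),
      (Fo ^ m) (H x) = H ((Fo ^ m) x) + ((2 * m : ℕ) : F) • (Fo ^ m) x := by
    intro m
    induction m with
    | zero => intro x; simp
    | succ m ih =>
      intro x
      rw [powS Fo m (H x), hHFv x, map_add, map_smul, ih (Fo x),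
        show (Fo ^ m) (Fo x) = (Fo ^ (m + 1)) x from (powS Fo m x).symm]
      push_cast
      module
  -- key commutation: Fo^(m+1) past E
  have hef : ∀ (m : ℕ) (x : M),
      (Fo ^ (m + 1)) (E x) = E ((Fo ^ (m + 1)) x)
        - (((m + 1) : ℕ) : F) • (Fo ^ m) (H x)
        + ((((m + 1) * m) : ℕ) : F) • (Fo ^ m) x := by
    intro m
    induction m with
    | zero =>
      intro x
      simp only [zero_add, pow_one, pow_zero, Module.End.one_apply]
      rw [hEFv x]
      push_cast
      module
    | succ m ih =>
      intro x
      have e1 : Fo (E x) = E (Fo x) - H x := by rw [hEFv x]; abel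
      have e2 : H (Fo x) = Fo (H x) - (2 : F) • Fo x := by rw [hHFv x]; abel
      rw [powS Fo (m + 1) (E x), e1, map_sub, ih (Fo x), e2, map_sub, map_smul,
        show (Fo ^ (m + 1)) (Fo x) = (Fo ^ (m + 1 + 1)) x from (powS Fo (m + 1) x).symm,
        show (Fo ^ m) (Fo x) = (Fo ^ (m + 1)) x from (powS Fo m x).symm,
        show (Fo ^ m) (Fo (H x)) = (Fo ^ (m + 1)) (H x) from (powS Fo m (H x)).symm]
      push_cast
      module
  -- main induction
  have key : ∀ (a b : ℕ), (Fo ^ (n + a)) ((E ^ a) ((H ^ b) v)) = 0 := by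
    intro a
    induction a with
    | zero =>
      intro b
      induction b with
      | zero => simpa using hF
      | succ b ihb =>
        simp only [pow_zero, Module.End.one_apply, Nat.add_zero] at ihb ⊢
        rw [powS' H b v, hfh n ((H ^ b) v), ihb]
        simp
    | succ a ih =>
      intro b
      show (Fo ^ (n + a + 1)) ((E ^ (a + 1)) ((H ^ b) v)) = 0
      have hu : (E ^ (a + 1)) ((H ^ b) v) = E ((E ^ a) ((H ^ b) v)) := powS' E a _
      rw [hu, hef (n + a) ((E ^ a) ((H ^ b) v))]
      have t1 : (Fo ^ (n + a + 1)) ((E ^ a) ((H ^ b) v)) = 0 := by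
        rw [powS' Fo (n + a), ih b, map_zero]
      have t2 : (Fo ^ (n + a)) (H ((E ^ a) ((H ^ b) v))) = 0 := by
        rw [hhe a ((H ^ b) v), map_add, map_smul,
          show H ((H ^ b) v) = (H ^ (b + 1)) v from (powS' H b v).symm, ih (b + 1), ih b]
        simp
      rw [t1, t2, ih b]
      simp
  -- conclude
  obtain ⟨a, rfl⟩ : ∃ a, k = a + 1 := ⟨k - 1, (Nat.succ_pred_eq_of_pos hk).symm⟩
  have : (Fo ^ (n + a)) ((E ^ a) v) = 0 := by simpa using key a 0
  simpa [Nat.add_sub_cancel] using this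
end

section
/- Let (V, ω) be a finite-dimensional symplectic vector space and L ⊂ V a Lagrangian subspace, with projection p : V → V/L. For a linear subspace Z ⊆ V the following are equivalent: (i) Z^⊥ ∩ L ⊆ Z ∩ L; (ii) p(Z^⊥) ⊆ p(Z); (iii) p(Z)^⊥ ⊆ Z ∩ L, where p(Z)^⊥ denotes the annihilator of p(Z) inside L under the identification L ≅ (V/L)* induced by ω. -/
theorem stmt_7 (F V : Type*) [Field F] [AddCommGroup V] [Module F V] [FiniteDimensional F V]
    (ω : LinearMap.BilinForm F V) (halt : ω.IsAlt) (hnd : ω.Nondegenerate)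
    (L : Submodule F V) (hL : ω.orthogonal L = L) (Z : Submodule F V) :
    ((ω.orthogonal Z ⊓ L ≤ Z ⊓ L) ↔
      ((ω.orthogonal Z).map L.mkQ ≤ Z.map L.mkQ)) ∧
    (((ω.orthogonal Z).map L.mkQ ≤ Z.map L.mkQ) ↔
      (∀ l ∈ L, (∀ z ∈ Z, ω l z = 0) → l ∈ Z ⊓ L)) := by
  have hrefl : ω.IsRefl := halt.isRefl
  have oo : ∀ W : Submodule F V, ω.orthogonal (ω.orthogonal W) = W :=
    LinearMap.BilinForm.orthogonal_orthogonal hnd hrefl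
  -- orthogonal of sup
  have osup : ∀ A B : Submodule F V,
      ω.orthogonal (A ⊔ B) = ω.orthogonal A ⊓ ω.orthogonal B := by
    intro A B
    apply le_antisymm
    · exact le_inf (LinearMap.BilinForm.orthogonal_le le_sup_left)
        (LinearMap.BilinForm.orthogonal_le le_sup_right)
    · intro x hx n hn
      obtain ⟨a, ha, b, hb, rfl⟩ := Submodule.mem_sup.mp hn
      have h1 : ω a x = 0 := hx.1 a ha
      have h2 : ω b x = 0 := hx.2 b hb
      show ω (a + b) x = 0
      rw [map_add, LinearMap.add_apply, h1, h2, add_zero]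
  -- the key equivalence (i) ↔ Z⊥ ≤ Z ⊔ L
  have key : (ω.orthogonal Z ⊓ L ≤ Z ⊓ L) ↔ ω.orthogonal Z ≤ Z ⊔ L := by
    constructor
    · intro h
      have h1 : ω.orthogonal (Z ⊔ L) ≤ Z := by
        rw [osup, hL]
        exact fun x hx => (h hx).1
      have := LinearMap.BilinForm.orthogonal_le (B := ω) h1
      rwa [oo] at this
    · intro h
      have h1 : ω.orthogonal (Z ⊔ L) ≤ ω.orthogonal (ω.orthogonal Z) :=
        LinearMap.BilinForm.orthogonal_le h
      rw [oo] at h1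
      rw [osup, hL] at h1
      exact fun x hx => ⟨h1 ⟨hx.1, hx.2⟩, hx.2⟩
  -- (ii) ↔ Z⊥ ≤ Z ⊔ L
  have hmap : ((ω.orthogonal Z).map L.mkQ ≤ Z.map L.mkQ) ↔ ω.orthogonal Z ≤ Z ⊔ L := by
    rw [Submodule.map_le_iff_le_comap, Submodule.comap_map_eq, L.ker_mkQ]
  -- (i) ↔ (iii) directly
  have hiii : (ω.orthogonal Z ⊓ L ≤ Z ⊓ L) ↔
      (∀ l ∈ L, (∀ z ∈ Z, ω l z = 0) → l ∈ Z ⊓ L) := by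
    constructor
    · intro h l hl hlz
      exact h ⟨fun z hz => hrefl l z (hlz z hz), hl⟩
    · intro h x hx
      exact h x hx.2 (fun z hz => hrefl z x (hx.1 z hz))
  exact ⟨key.trans hmap.symm, hmap.trans (key.symm.trans hiii)⟩
end

section
/- Let F be a field and n ≥ 2. Let P_n ⊂ GL_n(F) be the subgroup of matrices whose last row is (0, …, 0, 1), and let P_nᵗ be the subgroup of its transposes. Then P_n and P_nᵗ together generate GL_n(F). -/
open Matrix

namespace Stmt10Aux

variable (F : Type*) [Field F] (n : ℕ)

def S : Set (GL (Fin (n + 2)) F) :=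
  {g : Matrix.GeneralLinearGroup (Fin (n + 2)) F |
      ((∀ j : Fin (n + 2), j ≠ Fin.last (n + 1) →
          (g : Matrix (Fin (n + 2)) (Fin (n + 2)) F) (Fin.last (n + 1)) j = 0) ∧
        (g : Matrix (Fin (n + 2)) (Fin (n + 2)) F) (Fin.last (n + 1)) (Fin.last (n + 1)) = 1) ∨
      ((∀ j : Fin (n + 2), j ≠ Fin.last (n + 1) →
          ((g : Matrix (Fin (n + 2)) (Fin (n + 2)) F))ᵀ (Fin.last (n + 1)) j = 0) ∧
        ((g : Matrix (Fin (n + 2)) (Fin (n + 2)) F))ᵀ (Fin.last (n + 1)) (Fin.last (n + 1)) = 1)}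

variable {F n}

lemma zero_ne_last : (0 : Fin (n + 2)) ≠ Fin.last (n + 1) := by
  simp [Fin.ext_iff]

/-- transvection as a unit -/
def tvU (i j : Fin (n + 2)) (h : i ≠ j) (c : F) : GL (Fin (n + 2)) F :=
  ⟨transvection i j c, transvection i j (-c),
    by rw [transvection_mul_transvection_same _ _ h, add_neg_cancel, transvection_zero],
    by rw [transvection_mul_transvection_same _ _ h, neg_add_cancel, transvection_zero]⟩

@[simp] lemma coe_tvU (i j : Fin (n + 2)) (h : i ≠ j) (c : F) :
    (tvU i j h c : Matrix (Fin (n + 2)) (Fin (n + 2)) F) = transvection i j c := rfl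

lemma tvU_mem (i j : Fin (n + 2)) (h : i ≠ j) (c : F) : tvU i j h c ∈ S F n := by
  by_cases hi : i = Fin.last (n + 1)
  · subst hi
    refine Or.inr ⟨fun k hk => ?_, ?_⟩
    · simp only [coe_tvU, transvection, Matrix.transpose_apply, Matrix.add_apply]
      rw [Matrix.one_apply_ne hk]
      simp [Matrix.single_apply_of_ne, Ne.symm h]
    · simp only [coe_tvU, transvection, Matrix.transpose_apply, Matrix.add_apply]
      rw [Matrix.one_apply_eq]
      simp [Matrix.single_apply_of_ne, Ne.symm h]
  · refine Or.inl ⟨fun k hk => ?_, ?_⟩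
    · simp only [coe_tvU, transvection, Matrix.add_apply]
      rw [Matrix.one_apply_ne (Ne.symm hk)]
      simp [Matrix.single_apply_of_ne, hi]
    · simp only [coe_tvU, transvection, Matrix.add_apply]
      rw [Matrix.one_apply_eq]
      simp [Matrix.single_apply_of_ne, hi]

/-- invertible diagonal as a unit -/
def diagU (D : Fin (n + 2) → F) (h : ∀ i, D i ≠ 0) : GL (Fin (n + 2)) F :=
  ⟨diagonal D, diagonal fun i => (D i)⁻¹,
    by rw [diagonal_mul_diagonal]; convert diagonal_one; exact mul_inv_cancel₀ (h _),
    by rw [diagonal_mul_diagonal]; convert diagonal_one; exact inv_mul_cancel₀ (h _)⟩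

@[simp] lemma coe_diagU (D : Fin (n + 2) → F) (h : ∀ i, D i ≠ 0) :
    (diagU D h : Matrix (Fin (n + 2)) (Fin (n + 2)) F) = diagonal D := rfl

lemma diagU_mem (D : Fin (n + 2) → F) (h : ∀ i, D i ≠ 0) (hl : D (Fin.last (n + 1)) = 1) :
    diagU D h ∈ S F n := by
  refine Or.inl ⟨fun k hk => ?_, ?_⟩
  · simp [diagonal_apply_ne' _ hk]
  · simp [hl]

lemma scalar_matrix_eq (d : F) (hd : d ≠ 0) :
    diagonal (fun i : Fin (n + 2) => if i = Fin.last (n + 1) then d else 1) =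
      diagonal (fun i : Fin (n + 2) => if i = 0 then d else 1) *
        transvection 0 (Fin.last (n + 1)) d⁻¹ *
        transvection (Fin.last (n + 1)) 0 (-d) *
        transvection 0 (Fin.last (n + 1)) d⁻¹ *
        transvection 0 (Fin.last (n + 1)) (-1) *
        transvection (Fin.last (n + 1)) 0 1 *
        transvection 0 (Fin.last (n + 1)) (-1) := by
  have h0l : (0 : Fin (n + 2)) ≠ Fin.last (n + 1) := zero_ne_last
  ext a b
  rcases eq_or_ne b 0 with rfl | hb0
  · rcases eq_or_ne a 0 with rfl | ha0
    · simp [h0l, Ne.symm h0l, diagonal_apply, hd]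
    · rcases eq_or_ne a (Fin.last (n + 1)) with rfl | hal
      · simp [h0l, Ne.symm h0l, diagonal_apply, hd]
      · simp [h0l, Ne.symm h0l, ha0, hal, diagonal_apply, Ne.symm ha0, Ne.symm hal]
  · rcases eq_or_ne b (Fin.last (n + 1)) with rfl | hbl
    · rcases eq_or_ne a 0 with rfl | ha0
      · simp [h0l, Ne.symm h0l, diagonal_apply, hd]
      · rcases eq_or_ne a (Fin.last (n + 1)) with rfl | hal
        · simp [h0l, Ne.symm h0l, diagonal_apply, hd]
        · simp [h0l, Ne.symm h0l, ha0, hal, diagonal_apply, Ne.symm ha0, Ne.symm hal]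
    · rcases eq_or_ne a b with rfl | hab
      · simp [hb0, hbl, diagonal_apply]
      · simp [hb0, hbl, hab, diagonal_apply]

lemma scalarU_mem (d : F) (hd : d ≠ 0) (hD : ∀ i : Fin (n + 2), (if i = Fin.last (n + 1) then d else 1) ≠ 0) :
    diagU (fun i : Fin (n + 2) => if i = Fin.last (n + 1) then d else 1) hD ∈
      Subgroup.closure (S F n) := by
  have h0l : (0 : Fin (n + 2)) ≠ Fin.last (n + 1) := zero_ne_last
  have hD0 : ∀ i : Fin (n + 2), (if i = 0 then d else 1) ≠ 0 := fun i => by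
    split <;> simp [hd]
  have key : diagU (fun i : Fin (n + 2) => if i = Fin.last (n + 1) then d else 1) hD =
      diagU (fun i : Fin (n + 2) => if i = 0 then d else 1) hD0 *
        tvU 0 _ h0l d⁻¹ * tvU _ 0 h0l.symm (-d) * tvU 0 _ h0l d⁻¹ *
        tvU 0 _ h0l (-1) * tvU _ 0 h0l.symm 1 * tvU 0 _ h0l (-1) := by
    apply Units.ext
    exact scalar_matrix_eq d hd
  rw [key]
  refine mul_mem (mul_mem (mul_mem (mul_mem (mul_mem (mul_mem ?_ ?_) ?_) ?_) ?_) ?_) ?_ <;>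
    apply Subgroup.subset_closure
  · exact diagU_mem _ _ (if_neg (Ne.symm h0l))
  all_goals apply tvU_mem

lemma mem_closure (g : GL (Fin (n + 2)) F) : g ∈ Subgroup.closure (S F n) := by
  have hdet : ((g : Matrix (Fin (n + 2)) (Fin (n + 2)) F)).det ≠ 0 :=
    ((Matrix.isUnit_iff_isUnit_det _).mp g.isUnit).ne_zero
  refine Matrix.diagonal_transvection_induction_of_det_ne_zero
    (fun M => ∀ u : GL (Fin (n + 2)) F,
      (u : Matrix (Fin (n + 2)) (Fin (n + 2)) F) = M → u ∈ Subgroup.closure (S F n))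
    (g : Matrix (Fin (n + 2)) (Fin (n + 2)) F) hdet ?_ ?_ ?_ g rfl
  · intro D hD u hu
    have hDi : ∀ i, D i ≠ 0 := by
      rw [det_diagonal] at hD
      exact fun i h => hD (Finset.prod_eq_zero (Finset.mem_univ i) h)
    have hD1 : ∀ i : Fin (n + 2), (if i = Fin.last (n + 1) then 1 else D i) ≠ 0 := fun i => by
      split <;> simp [hDi]
    have hD2 : ∀ i : Fin (n + 2),
        (if i = Fin.last (n + 1) then D (Fin.last (n + 1)) else 1) ≠ 0 := fun i => by
      split <;> simp [hDi]
    have hu2 : u = diagU (fun i => if i = Fin.last (n + 1) then 1 else D i) hD1 *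
        diagU (fun i => if i = Fin.last (n + 1) then D (Fin.last (n + 1)) else 1) hD2 := by
      apply Units.ext
      show (u : Matrix (Fin (n + 2)) (Fin (n + 2)) F) = diagonal _ * diagonal _
      rw [hu, diagonal_mul_diagonal]
      refine congrArg diagonal (funext fun i => ?_)
      by_cases h : i = Fin.last (n + 1)
      · simp [h]
      · simp [h]
    rw [hu2]
    exact mul_mem (Subgroup.subset_closure (diagU_mem _ _ (if_pos rfl)))
      (scalarU_mem _ (hDi _) hD2)
  · rintro ⟨i, j, hij, c⟩ u hu
    have : u = tvU i j hij c := Units.ext hu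
    rw [this]
    exact Subgroup.subset_closure (tvU_mem i j hij c)
  · intro A B hA hB PA PB u hu
    have : u = Matrix.GeneralLinearGroup.mkOfDetNeZero A hA *
        Matrix.GeneralLinearGroup.mkOfDetNeZero B hB := Units.ext hu
    rw [this]
    exact mul_mem (PA _ rfl) (PB _ rfl)

end Stmt10Aux

open Matrix

theorem stmt_10 (F : Type*) [Field F] (n : ℕ) :
    Subgroup.closure {g : Matrix.GeneralLinearGroup (Fin (n + 2)) F |
      ((∀ j : Fin (n + 2), j ≠ Fin.last (n + 1) →
          (g : Matrix (Fin (n + 2)) (Fin (n + 2)) F) (Fin.last (n + 1)) j = 0) ∧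
        (g : Matrix (Fin (n + 2)) (Fin (n + 2)) F) (Fin.last (n + 1)) (Fin.last (n + 1)) = 1) ∨
      ((∀ j : Fin (n + 2), j ≠ Fin.last (n + 1) →
          ((g : Matrix (Fin (n + 2)) (Fin (n + 2)) F))ᵀ (Fin.last (n + 1)) j = 0) ∧
        ((g : Matrix (Fin (n + 2)) (Fin (n + 2)) F))ᵀ (Fin.last (n + 1)) (Fin.last (n + 1)) = 1)}
      = ⊤ := by
  rw [eq_top_iff]
  rintro g -
  exact Stmt10Aux.mem_closure g
end

section
/- Let F be a field of characteristic zero and let A be the n×n regular nilpotent Jordan block. Let M be an n×n matrix with M_{k,l} = 0 unless k ≤ i and l > i for some fixed 0 < i < n. Then any matrix B satisfying [A, B] = M is upper triangular. -/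
open Matrix

/-- The `n × n` regular nilpotent Jordan block: `1`s on the first superdiagonal. -/
def jordanBlock (F : Type*) [Field F] (n : ℕ) : Matrix (Fin n) (Fin n) F :=
  Matrix.of fun k l => if (l : ℕ) = (k : ℕ) + 1 then 1 else 0

theorem stmt_12 (F : Type*) [Field F] [CharZero F] (n i : ℕ) (hi : 0 < i) (hin : i < n)
    (M B : Matrix (Fin n) (Fin n) F)
    (hM : ∀ k l : Fin n, ¬((k : ℕ) < i ∧ i ≤ (l : ℕ)) → M k l = 0)
    (hB : jordanBlock F n * B - B * jordanBlock F n = M) :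
    ∀ k l : Fin n, (l : ℕ) < (k : ℕ) → B k l = 0 := by
  have hAB : ∀ (k l : Fin n) (hk : (k : ℕ) + 1 < n),
      (jordanBlock F n * B) k l = B ⟨(k : ℕ) + 1, hk⟩ l := by
    intro k l hk
    rw [Matrix.mul_apply, Finset.sum_eq_single (⟨(k : ℕ) + 1, hk⟩ : Fin n)]
    · simp [jordanBlock]
    · intro j _ hj
      have : (j : ℕ) ≠ (k : ℕ) + 1 := by
        intro h; exact hj (Fin.ext h)
      simp [jordanBlock, this]
    · simp
  have hBA : ∀ (k l : Fin n), 0 < (l : ℕ) →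
      (B * jordanBlock F n) k l = B k ⟨(l : ℕ) - 1, by omega⟩ := by
    intro k l hl
    have hl1 : (l : ℕ) - 1 < n := by have := l.isLt; omega
    rw [Matrix.mul_apply, Finset.sum_eq_single (⟨(l : ℕ) - 1, hl1⟩ : Fin n)]
    · have : (l : ℕ) = (l : ℕ) - 1 + 1 := by omega
      simp [jordanBlock, ← this]
    · intro j _ hj
      have : (l : ℕ) ≠ (j : ℕ) + 1 := by
        intro h
        exact hj (Fin.ext (by simp; omega))
      simp [jordanBlock, this]
    · simp
  have hBA0 : ∀ (k l : Fin n), (l : ℕ) = 0 → (B * jordanBlock F n) k l = 0 := by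
    intro k l hl
    rw [Matrix.mul_apply]
    apply Finset.sum_eq_zero
    intro j _
    have : (l : ℕ) ≠ (j : ℕ) + 1 := by omega
    simp [jordanBlock, this]
  suffices H : ∀ m : ℕ, ∀ k l : Fin n, (l : ℕ) = m → (l : ℕ) < (k : ℕ) → B k l = 0 by
    intro k l h; exact H l k l rfl h
  intro m
  induction m using Nat.strong_induction_on with
  | _ m ih =>
    intro k l hm hlk
    have hkn : (k : ℕ) < n := k.isLt
    have hk1 : 1 ≤ (k : ℕ) := by omega
    set k' : Fin n := ⟨(k : ℕ) - 1, by omega⟩ with hk'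
    have hk'v : (k' : ℕ) = (k : ℕ) - 1 := rfl
    have hM0 : M k' l = 0 := by
      apply hM
      rintro ⟨h1, h2⟩
      omega
    have heq := congrFun (congrFun hB k') l
    have hk'1 : (k' : ℕ) + 1 < n := by omega
    rw [Matrix.sub_apply, hAB k' l hk'1, hM0, sub_eq_zero] at heq
    have hcast : (⟨(k' : ℕ) + 1, hk'1⟩ : Fin n) = k := Fin.ext (by simp [hk'v]; omega)
    rw [hcast] at heq
    by_cases hl0 : (l : ℕ) = 0
    · rw [heq, hBA0 k' l hl0]
    · have hlpos : 0 < (l : ℕ) := by omega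
      rw [heq, hBA k' l hlpos]
      exact ih ((l : ℕ) - 1) (by omega) k' ⟨(l : ℕ) - 1, by omega⟩ rfl (by simp [hk'v]; omega)
end

section
/- Let F be a field of characteristic zero, A the n×n regular nilpotent Jordan block, 0 < i < n, and M an n×n matrix with M_{k,l} = 0 unless k ≤ i and l > i. If there exists a nilpotent matrix B with [A, B] = M, then M_{i, i+1} = 0. -/
open Matrix

lemma jb_mul {F : Type*} [Field F] {n : ℕ} (B : Matrix (Fin n) (Fin n) F) (k l : Fin n) :
    (jordanBlock F n * B) k l =
      if h : (k : ℕ) + 1 < n then B ⟨(k : ℕ) + 1, h⟩ l else 0 := by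
  rw [Matrix.mul_apply]
  simp only [jordanBlock, Matrix.of_apply]
  split
  · rename_i h
    rw [Finset.sum_eq_single (⟨(k : ℕ) + 1, h⟩ : Fin n)]
    · simp
    · intro b _ hb
      rw [if_neg, zero_mul]
      intro hc
      exact hb (Fin.ext hc)
    · simp
  · rename_i h
    apply Finset.sum_eq_zero
    intro b _
    rw [if_neg, zero_mul]
    intro hc
    exact h (hc ▸ b.isLt)

lemma mul_jb {F : Type*} [Field F] {n : ℕ} (B : Matrix (Fin n) (Fin n) F) (k l : Fin n) :
    (B * jordanBlock F n) k l =
      if h : 0 < (l : ℕ) then B k ⟨(l : ℕ) - 1, lt_trans (by omega) l.isLt⟩ else 0 := by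
  rw [Matrix.mul_apply]
  simp only [jordanBlock, Matrix.of_apply]
  split
  · rename_i h
    rw [Finset.sum_eq_single (⟨(l : ℕ) - 1, lt_trans (by omega) l.isLt⟩ : Fin n)]
    · rw [if_pos (by simp only [Fin.val_mk]; omega), mul_one]
    · intro b _ hb
      rw [if_neg, mul_zero]
      intro hc
      exact hb (Fin.ext (by simp only [Fin.val_mk]; omega))
    · simp
  · rename_i h
    apply Finset.sum_eq_zero
    intro b _
    rw [if_neg, mul_zero]
    intro hc
    omega

theorem stmt_13 (F : Type*) [Field F] [CharZero F] (n i : ℕ) (hi : 0 < i) (hin : i < n)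
    (M B : Matrix (Fin n) (Fin n) F)
    (hM : ∀ k l : Fin n, ¬((k : ℕ) < i ∧ i ≤ (l : ℕ)) → M k l = 0)
    (hBnil : IsNilpotent B)
    (hB : jordanBlock F n * B - B * jordanBlock F n = M) :
    M ⟨i - 1, by omega⟩ ⟨i, by omega⟩ = 0 := by
  have hE : ∀ k l : Fin n, M k l =
      (if h : (k : ℕ) + 1 < n then B ⟨(k : ℕ) + 1, h⟩ l else 0) -
      (if h : 0 < (l : ℕ) then B k ⟨(l : ℕ) - 1, lt_trans (by omega) l.isLt⟩ else 0) := by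
    intro k l
    rw [← hB]
    simp [Matrix.sub_apply, jb_mul, mul_jb]
  -- B is upper triangular
  have hlow : ∀ (lv : ℕ) (k l : Fin n), (l : ℕ) = lv → (l : ℕ) < (k : ℕ) → B k l = 0 := by
    intro lv
    induction lv with
    | zero =>
      intro k l hl hlk
      have hk1 : (k : ℕ) - 1 < n := by omega
      have hMz : M ⟨(k : ℕ) - 1, hk1⟩ l = 0 :=
        hM _ _ (by simp only [Fin.val_mk]; omega)
      rw [hE] at hMz
      simp only [Fin.val_mk] at hMz
      rw [dif_pos (show (k:ℕ) - 1 + 1 < n by omega), dif_neg (by omega), sub_zero] at hMz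
      have hk : k = ⟨(k:ℕ) - 1 + 1, by omega⟩ := Fin.ext (by simp only [Fin.val_mk]; omega)
      rw [hk]
      exact hMz
    | succ m ih =>
      intro k l hl hlk
      have hk1 : (k : ℕ) - 1 < n := by omega
      have hMz : M ⟨(k : ℕ) - 1, hk1⟩ l = 0 :=
        hM _ _ (by simp only [Fin.val_mk]; omega)
      rw [hE] at hMz
      simp only [Fin.val_mk] at hMz
      rw [dif_pos (show (k:ℕ) - 1 + 1 < n by omega), dif_pos (by omega)] at hMz
      have h2 : B ⟨(k:ℕ)-1, hk1⟩ ⟨(l:ℕ)-1, lt_trans (by omega) l.isLt⟩ = 0 :=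
        ih _ _ (by simp only [Fin.val_mk]; omega) (by simp only [Fin.val_mk]; omega)
      rw [h2, sub_zero] at hMz
      have hk : k = ⟨(k:ℕ) - 1 + 1, by omega⟩ := Fin.ext (by simp only [Fin.val_mk]; omega)
      rw [hk]
      exact hMz
  have hlow' : ∀ k l : Fin n, (l : ℕ) < (k : ℕ) → B k l = 0 := fun k l h => hlow _ k l rfl h
  -- powers of B: triangular with diagonal (B k k)^m
  have hpow : ∀ m : ℕ, (∀ k l : Fin n, (l : ℕ) < (k : ℕ) → (B ^ m) k l = 0) ∧
      (∀ k : Fin n, (B ^ m) k k = (B k k) ^ m) := by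
    intro m
    induction m with
    | zero =>
      refine ⟨fun k l h => ?_, fun k => by simp [Matrix.one_apply]⟩
      rw [pow_zero, Matrix.one_apply_ne (fun hc => by rw [hc] at h; omega)]
    | succ m ih =>
      constructor
      · intro k l h
        rw [pow_succ, Matrix.mul_apply]
        apply Finset.sum_eq_zero
        intro j _
        rcases lt_or_ge (j : ℕ) (k : ℕ) with hj | hj
        · rw [ih.1 k j hj, zero_mul]
        · rw [hlow' j l (by omega), mul_zero]
      · intro k
        rw [pow_succ, Matrix.mul_apply, pow_succ]
        rw [Finset.sum_eq_single k]
        · rw [ih.2]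
        · intro j _ hj
          rcases lt_or_ge (j : ℕ) (k : ℕ) with hj2 | hj2
          · rw [ih.1 k j hj2, zero_mul]
          · have : (k : ℕ) < (j : ℕ) :=
              lt_of_le_of_ne hj2 (fun hc => hj (Fin.ext hc.symm))
            rw [hlow' j k this, mul_zero]
        · simp
  -- diagonal of B is zero
  have hdiag : ∀ k : Fin n, B k k = 0 := by
    obtain ⟨m, hm⟩ := hBnil
    intro k
    have hm1 : B ^ (m + 1) = 0 := by rw [pow_succ, hm, Matrix.zero_mul]
    have h := (hpow (m + 1)).2 k
    rw [hm1] at h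
    simp only [Matrix.zero_apply] at h
    exact pow_eq_zero_iff (by omega) |>.mp h.symm
  rw [hE]
  simp only [Fin.val_mk]
  rw [dif_pos (show i - 1 + 1 < n by omega), dif_pos hi]
  have e1 : B ⟨i - 1 + 1, by omega⟩ ⟨i, by omega⟩ = 0 := by
    have h := hdiag ⟨i, by omega⟩
    have : (⟨i - 1 + 1, by omega⟩ : Fin n) = ⟨i, by omega⟩ :=
      Fin.ext (by simp only [Fin.val_mk]; omega)
    rw [this]
    exact h
  have e2 : B ⟨i - 1, by omega⟩ ⟨i - 1, by omega⟩ = 0 := hdiag _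
  rw [e1, e2, sub_zero]
end
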